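/- arXiv:1412.2268 — 6 statements merged into one kernel-verified Lean document; each statement's English description precedes it below -/
import Mathlib

section
/- Let $u(p) = \frac{C V_0^a \log_2(1 + p\alpha)}{(p + p_0)^a}$ on $[0,\infty)$, with $C, V_0, \alpha, p_0 > 0$ and $a > 1$, and let $\tilde p > 0$ be the unique zero of $f(p) = \frac{(p+p_0)\alpha}{1+p\alpha} - a\ln(1+p\alpha)$. Then $u$ is strictly increasing on $[0, \tilde p]$ and strictly decreasing on $[\tilde p, \infty)$; in particular $\tilde p$ is the unique global maximizer of $u$ on $(0,\infty)$. -/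
/-- The utility `u` is strictly increasing on `[0, p̃]` and strictly decreasing
on `[p̃, ∞)`, where `p̃` is the unique positive zero of `f`; in particular `p̃`
is the unique global maximizer of `u` on `(0,∞)`. -/
theorem u_unimodal
    (C V0 α p0 a : ℝ) (hC : 0 < C) (hV0 : 0 < V0) (hα : 0 < α)
    (hp0 : 0 < p0) (ha : 1 < a)
    (u f : ℝ → ℝ)
    (hu : ∀ p, u p = C * V0 ^ a * Real.logb 2 (1 + p * α) / (p + p0) ^ a)
    (hf : ∀ p, f p = (p + p0) * α / (1 + p * α) - a * Real.log (1 + p * α))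
    (pt : ℝ) (hpt : 0 < pt) (hfpt : f pt = 0)
    (huniq : ∀ p, 0 < p → f p = 0 → p = pt) :
    StrictMonoOn u (Set.Icc 0 pt) ∧
    StrictAntiOn u (Set.Ici pt) ∧
    (∀ p, 0 < p → p ≠ pt → u p < u pt) := by
  have hlog2 : (0:ℝ) < Real.log 2 := Real.log_pos (by norm_num)
  set K : ℝ := C * V0 ^ a with hK
  have hKpos : 0 < K := mul_pos hC (Real.rpow_pos_of_pos hV0 a)
  -- positivity of 1 + p*α and p + p0 for p ≥ 0
  have hs : ∀ p : ℝ, 0 ≤ p → 0 < 1 + p * α := fun p hp => by positivity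
  have hx : ∀ p : ℝ, 0 ≤ p → 0 < p + p0 := fun p hp => by linarith
  -- continuity of f on [0, ∞)
  have hfc : ∀ p : ℝ, 0 ≤ p → ContinuousAt f p := by
    intro p hp
    have hfe : f = fun q => (q + p0) * α / (1 + q * α) - a * Real.log (1 + q * α) :=
      funext hf
    rw [hfe]
    have h1 : ContinuousAt (fun q : ℝ => (q + p0) * α / (1 + q * α)) p :=
      ContinuousAt.div (by fun_prop) (by fun_prop) (hs p hp).ne'
    have h2 : ContinuousAt (fun q : ℝ => Real.log (1 + q * α)) p :=
      ContinuousAt.log (by fun_prop) (hs p hp).ne'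
    exact h1.sub (h2.const_mul a)
  have hfcOn : ∀ s : Set ℝ, s ⊆ Set.Ici 0 → ContinuousOn f s := fun s hsub p hp =>
    (hfc p (hsub hp)).continuousWithinAt
  -- f > 0 on [0, pt)
  have hf0 : 0 < f 0 := by
    rw [hf]; simp [Real.log_one]; positivity
  have hfpos : ∀ q : ℝ, 0 ≤ q → q < pt → 0 < f q := by
    intro q hq hqpt
    rcases eq_or_lt_of_le hq with rfl | hq'
    · exact hf0
    rcases lt_trichotomy (f q) 0 with hneg | hzero | hposq
    · exfalso
      have hsub : Set.Icc (0:ℝ) q ⊆ Set.Ici 0 := fun x hx => hx.1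
      have := intermediate_value_Ioo' (le_of_lt hq') (hfcOn _ hsub)
      have h0 : (0:ℝ) ∈ Set.Ioo (f q) (f 0) := ⟨hneg, hf0⟩
      obtain ⟨c, hc, hfc0⟩ := this h0
      have := huniq c hc.1 hfc0
      linarith [hc.2, this ▸ hc.2]
    · exact absurd (huniq q hq' hzero) (ne_of_lt hqpt)
    · exact hposq
  -- f < 0 on (pt, ∞)
  have hfub : ∀ q : ℝ, 0 ≤ q → f q ≤ 1 + p0 * α - a * Real.log (1 + q * α) := by
    intro q hq
    rw [hf]
    have hs' := hs q hq
    have : (q + p0) * α / (1 + q * α) ≤ 1 + p0 * α := by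
      rw [div_le_iff₀ hs']
      nlinarith [mul_nonneg (mul_nonneg hp0.le hα.le) (mul_nonneg hq hα.le)]
    linarith
  have hfneg : ∀ q : ℝ, pt < q → f q < 0 := by
    intro q hqpt
    have hq : 0 ≤ q := le_of_lt (hpt.trans hqpt)
    by_contra hcon
    push_neg at hcon
    -- choose M large with f M < 0
    set M : ℝ := max (q + 1) ((Real.exp ((2 + p0 * α) / a) - 1) / α) with hM
    have hMq : q < M := lt_of_lt_of_le (by linarith) (le_max_left _ _)
    have hM0 : 0 ≤ M := hq.trans hMq.le
    have hMexp : Real.exp ((2 + p0 * α) / a) ≤ 1 + M * α := by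
      have h1 : (Real.exp ((2 + p0 * α) / a) - 1) / α ≤ M := le_max_right _ _
      rw [div_le_iff₀ hα] at h1
      linarith
    have hlogM : (2 + p0 * α) / a ≤ Real.log (1 + M * α) := by
      rw [← Real.log_exp ((2 + p0 * α) / a)]
      exact Real.log_le_log (Real.exp_pos _) hMexp
    have hfM : f M < 0 := by
      have := hfub M hM0
      have h2 : 2 + p0 * α ≤ a * Real.log (1 + M * α) := by
        rw [div_le_iff₀ (by linarith : (0:ℝ) < a)] at hlogM
        linarith [hlogM]
      linarith
    rcases eq_or_lt_of_le hcon with hz | hposq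
    · exact absurd (huniq q (hpt.trans hqpt) hz.symm) (ne_of_gt hqpt)
    · have hsub : Set.Icc q M ⊆ Set.Ici 0 := fun x hx => hq.trans hx.1
      have := intermediate_value_Ioo' hMq.le (hfcOn _ hsub)
      obtain ⟨c, hc, hfc0⟩ := this (⟨hfM, hposq⟩ : (0:ℝ) ∈ Set.Ioo (f M) (f q))
      have hcpt := huniq c (hq.trans_lt hc.1) hfc0
      linarith [hc.1, hcpt ▸ hc.1]
  -- derivative of u
  have hder : ∀ p : ℝ, 0 ≤ p →
      HasDerivAt u (K / Real.log 2 * (f p / (p + p0) ^ (a + 1))) p := by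
    intro p hp
    have hs' := hs p hp
    have hx' := hx p hp
    have hxa : (0:ℝ) < (p + p0) ^ a := Real.rpow_pos_of_pos hx' a
    -- derivative of log (1 + q α)
    have h1 : HasDerivAt (fun q : ℝ => 1 + q * α) α p := by
      simpa using ((hasDerivAt_id p).mul_const α).const_add 1
    have hlog : HasDerivAt (fun q : ℝ => Real.log (1 + q * α)) (α / (1 + p * α)) p :=
      h1.log hs'.ne'
    have hnum : HasDerivAt (fun q : ℝ => K / Real.log 2 * Real.log (1 + q * α))
        (K / Real.log 2 * (α / (1 + p * α))) p := hlog.const_mul _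
    have hpow : HasDerivAt (fun q : ℝ => (q + p0) ^ a) (a * (p + p0) ^ (a - 1)) p := by
      have := (Real.hasDerivAt_rpow_const (p := a) (Or.inl hx'.ne')).comp p
        ((hasDerivAt_id p).add_const p0)
      simpa [Function.comp_def] using this
    have hdiv := hnum.div hpow hxa.ne'
    have hufun : u = fun q : ℝ => K / Real.log 2 * Real.log (1 + q * α) / (q + p0) ^ a := by
      funext q
      rw [hu q, Real.logb]
      field_simp
    rw [hufun]
    refine hdiv.congr_deriv ?_
    -- algebraic identity for the derivative value
    rw [hf]
    have e1 : (p + p0) ^ a * (p + p0) ^ a = (p + p0) ^ (a + 1) * (p + p0) ^ (a - 1) := by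
      rw [← Real.rpow_add hx', ← Real.rpow_add hx']; ring_nf
    have e2 : (p + p0) ^ a = (p + p0) * (p + p0) ^ (a - 1) := by
      nth_rewrite 1 [show a = 1 + (a - 1) by ring]
      rw [Real.rpow_add hx', Real.rpow_one]
    have hxa1 : (0:ℝ) < (p + p0) ^ (a + 1) := Real.rpow_pos_of_pos hx' _
    have hxam : (0:ℝ) < (p + p0) ^ (a - 1) := Real.rpow_pos_of_pos hx' _
    rw [sq, e1, e2]
    field_simp
  have hcontU : ∀ s : Set ℝ, s ⊆ Set.Ici 0 → ContinuousOn u s := fun s hsub p hp =>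
    ((hder p (hsub hp)).differentiableAt.continuousAt).continuousWithinAt
  have hderiv : ∀ p : ℝ, 0 ≤ p →
      deriv u p = K / Real.log 2 * (f p / (p + p0) ^ (a + 1)) := fun p hp =>
    (hder p hp).deriv
  -- strict monotonicity
  have hmono : StrictMonoOn u (Set.Icc 0 pt) := by
    apply strictMonoOn_of_deriv_pos (convex_Icc _ _)
      (hcontU _ (fun x hx => hx.1))
    intro x hxmem
    rw [interior_Icc] at hxmem
    rw [hderiv x hxmem.1.le]
    have := hfpos x hxmem.1.le hxmem.2
    have hxa1 : (0:ℝ) < (x + p0) ^ (a + 1) := Real.rpow_pos_of_pos (hx x hxmem.1.le) _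
    positivity
  have hanti : StrictAntiOn u (Set.Ici pt) := by
    apply strictAntiOn_of_deriv_neg (convex_Ici _)
      (hcontU _ (fun x hx => hpt.le.trans hx))
    intro x hxmem
    rw [interior_Ici] at hxmem
    rw [hderiv x (hpt.le.trans hxmem.le)]
    have hfx := hfneg x hxmem
    have hxa1 : (0:ℝ) < (x + p0) ^ (a + 1) :=
      Real.rpow_pos_of_pos (hx x (hpt.le.trans hxmem.le)) _
    have h1 : 0 < K / Real.log 2 := by positivity
    have h2 : f x / (x + p0) ^ (a + 1) < 0 := div_neg_of_neg_of_pos hfx hxa1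
    exact mul_neg_of_pos_of_neg h1 h2
  refine ⟨hmono, hanti, ?_⟩
  intro p hp hne
  rcases lt_or_gt_of_ne hne with h | h
  · exact hmono ⟨hp.le, h.le⟩ ⟨hpt.le, le_refl pt⟩ h
  · exact hanti (le_refl pt) h.le h
end

section
/- Let $u(p) = \frac{C V_0^a \log_2(1 + p\alpha)}{(p + p_0)^a}$ on $[0, \bar p]$ with $C, V_0, \alpha, p_0, \bar p > 0$ and $a > 1$, and let $\tilde p$ denote the unique maximizer of $u$ on $(0,\infty)$. Then the constrained maximizer of $u$ over $[0,\bar p]$ is $\min(\tilde p, \bar p)$. -/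
/-- The constrained maximizer of the utility `u` over `[0, p̄]` is `min(p̃, p̄)`,
where `p̃` is the unique maximizer of `u` on `(0,∞)` (the unique positive zero of `f`). -/
theorem best_response_min
    (C V0 α p0 a pbar : ℝ) (hC : 0 < C) (hV0 : 0 < V0) (hα : 0 < α)
    (hp0 : 0 < p0) (ha : 1 < a) (hpbar : 0 < pbar)
    (u f : ℝ → ℝ)
    (hu : ∀ p, u p = C * V0 ^ a * Real.logb 2 (1 + p * α) / (p + p0) ^ a)
    (hf : ∀ p, f p = (p + p0) * α / (1 + p * α) - a * Real.log (1 + p * α))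
    (pt : ℝ) (hpt : 0 < pt) (hfpt : f pt = 0)
    (hmax : ∀ p, 0 < p → p ≠ pt → u p < u pt) :
    ∀ p ∈ Set.Icc (0 : ℝ) pbar, u p ≤ u (min pt pbar) := by
  have hlog2 : (0:ℝ) < Real.log 2 := Real.log_pos one_lt_two
  have hK : (0:ℝ) < C * V0 ^ a := mul_pos hC (Real.rpow_pos_of_pos hV0 a)
  -- positivity facts for x ≥ 0
  have hy : ∀ x : ℝ, 0 ≤ x → 0 < 1 + x * α := fun x hx => by nlinarith
  have hq : ∀ x : ℝ, 0 ≤ x → 0 < x + p0 := fun x hx => by linarith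
  -- derivative of f
  have hderf : ∀ x : ℝ, 0 ≤ x → HasDerivAt f
      ((1 * α * (1 + x * α) - (x + p0) * α * α) / (1 + x * α) ^ 2
        - a * (α / (1 + x * α))) x := by
    intro x hx
    have hyne : (1 + x * α) ≠ 0 := (hy x hx).ne'
    have h1 : HasDerivAt (fun p : ℝ => 1 + p * α) α x := by
      simpa using ((hasDerivAt_id x).mul_const α).const_add 1
    have h2 : HasDerivAt (fun p : ℝ => (p + p0) * α) (1 * α) x :=
      ((hasDerivAt_id x).add_const p0).mul_const α
    have hterm1 := h2.div h1 hyne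
    have hterm2 := (h1.log hyne).const_mul a
    have := hterm1.sub hterm2
    have hfe : f = fun p => (p + p0) * α / (1 + p * α) - a * Real.log (1 + p * α) :=
      funext hf
    rw [hfe]
    exact this
  -- f strictly decreasing on Icc 0 pt
  have hfanti : StrictAntiOn f (Set.Icc 0 pt) := by
    apply strictAntiOn_of_deriv_neg (convex_Icc 0 pt)
    · intro x hx
      exact (hderf x hx.1).continuousAt.continuousWithinAt
    · intro x hx
      rw [interior_Icc] at hx
      have hx0 : 0 ≤ x := hx.1.le
      rw [(hderf x hx0).deriv]
      have hypos := hy x hx0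
      have hqpos := hq x hx0
      have key : (1 * α * (1 + x * α) - (x + p0) * α * α) / (1 + x * α) ^ 2
          - a * (α / (1 + x * α))
          = α * ((1 - a) * (1 + x * α) - (x + p0) * α) / (1 + x * α) ^ 2 := by
        field_simp
        ring
      rw [key]
      apply div_neg_of_neg_of_pos _ (by positivity)
      apply mul_neg_of_pos_of_neg hα
      nlinarith
  -- f is positive on [0, pt)
  have hfpos : ∀ x : ℝ, 0 ≤ x → x < pt → 0 < f x := by
    intro x hx0 hxpt
    have := hfanti ⟨hx0, hxpt.le⟩ ⟨hpt.le, le_refl pt⟩ hxpt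
    rwa [hfpt] at this
  -- derivative of u
  have hderu : ∀ x : ℝ, 0 ≤ x → HasDerivAt u
      ((C * V0 ^ a * (α / (1 + x * α)) / Real.log 2 * (x + p0) ^ a
        - C * V0 ^ a * (Real.log (1 + x * α) / Real.log 2)
          * (1 * a * (x + p0) ^ (a - 1))) / ((x + p0) ^ a) ^ 2) x := by
    intro x hx
    have hyne : (1 + x * α) ≠ 0 := (hy x hx).ne'
    have hqne : (x + p0) ≠ 0 := (hq x hx).ne'
    have h1 : HasDerivAt (fun p : ℝ => 1 + p * α) α x := by
      simpa using ((hasDerivAt_id x).mul_const α).const_add 1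
    have hN : HasDerivAt (fun p : ℝ => C * V0 ^ a * (Real.log (1 + p * α) / Real.log 2))
        (C * V0 ^ a * (α / (1 + x * α)) / Real.log 2) x := by
      have := ((h1.log hyne).div_const (Real.log 2)).const_mul (C * V0 ^ a)
      simpa [mul_div_assoc] using this
    have hD : HasDerivAt (fun p : ℝ => (p + p0) ^ a) (1 * a * (x + p0) ^ (a - 1)) x :=
      ((hasDerivAt_id x).add_const p0).rpow_const (Or.inl hqne)
    have hDne : (x + p0) ^ a ≠ 0 := (Real.rpow_pos_of_pos (hq x hx) a).ne'
    have hue : u = fun p => C * V0 ^ a * (Real.log (1 + p * α) / Real.log 2) / (p + p0) ^ a := by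
      funext p
      rw [hu p, Real.logb]
    rw [hue]
    exact hN.div hD hDne
  -- u strictly increasing on Icc 0 pt
  have hmono : StrictMonoOn u (Set.Icc 0 pt) := by
    apply strictMonoOn_of_deriv_pos (convex_Icc 0 pt)
    · intro x hx
      exact (hderu x hx.1).continuousAt.continuousWithinAt
    · intro x hx
      rw [interior_Icc] at hx
      have hx0 : 0 ≤ x := hx.1.le
      rw [(hderu x hx0).deriv]
      have hypos := hy x hx0
      have hqpos := hq x hx0
      have hDpos : 0 < (x + p0) ^ a := Real.rpow_pos_of_pos hqpos a
      have hD1pos : 0 < (x + p0) ^ (a - 1) := Real.rpow_pos_of_pos hqpos (a - 1)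
      have hsplit : (x + p0) ^ a = (x + p0) ^ (a - 1) * (x + p0) := by
        rw [← Real.rpow_add_one hqpos.ne' (a - 1)]
        ring_nf
      have hfx : 0 < f x := hfpos x hx0 hx.2
      have key : C * V0 ^ a * (α / (1 + x * α)) / Real.log 2 * (x + p0) ^ a
          - C * V0 ^ a * (Real.log (1 + x * α) / Real.log 2)
            * (1 * a * (x + p0) ^ (a - 1))
          = C * V0 ^ a * (x + p0) ^ (a - 1) * f x / Real.log 2 := by
        rw [hf x, hsplit]
        field_simp
      rw [key]
      positivity
  have hmono' := hmono.monotoneOn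
  intro p hp
  rcases le_total pt pbar with h | h
  · rw [min_eq_left h]
    rcases le_or_gt p pt with hle | hlt
    · exact hmono' ⟨hp.1, hle⟩ ⟨hpt.le, le_refl pt⟩ hle
    · exact (hmax p (hpt.trans hlt) hlt.ne').le
  · rw [min_eq_right h]
    exact hmono' ⟨hp.1, hp.2.trans h⟩ ⟨hpbar.le, h⟩ hp.2
end

section
/- For each player $i$, the implicitly defined optimal power $\tilde p_i$ (the unique positive zero of $f_i(p) = \frac{(p+p_0)\alpha_i}{1+p\alpha_i} - a\ln(1+p\alpha_i)$, viewed as a function of the channel quality $\alpha_i > 0$) is strictly decreasing in $\alpha_i$: if $0 < \alpha < \alpha'$ and $\tilde p(\alpha), \tilde p(\alpha')$ are the corresponding zeros, then $\tilde p(\alpha') < \tilde p(\alpha)$. -/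
open Real Set

private lemma hasDerivAt_log1p (x : ℝ) (hx : 0 < 1 + x) :
    HasDerivAt (fun y : ℝ => Real.log (1 + y)) (1 / (1 + x)) x := by
  have h := (Real.hasDerivAt_log (ne_of_gt hx)).comp x ((hasDerivAt_id x).const_add 1)
  simpa [Function.comp_def] using h

private lemma hasDerivAt_N (x : ℝ) (hx : 0 < 1 + x) :
    HasDerivAt (fun y : ℝ => (1 + y) * Real.log (1 + y)) (Real.log (1 + x) + 1) x := by
  have h1 : HasDerivAt (fun y : ℝ => 1 + y) 1 x := (hasDerivAt_id x).const_add 1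
  have h : HasDerivAt (fun y : ℝ => (1 + y) * Real.log (1 + y)) _ x := h1.mul (hasDerivAt_log1p x hx)
  have hne : (1 + x) ≠ 0 := ne_of_gt hx
  convert h using 1
  field_simp

private lemma hAux_strictMono (a : ℝ) (ha : 1 < a) :
    StrictMonoOn (fun x : ℝ => a * ((1 + x) * Real.log (1 + x)) - x) (Set.Ici (0:ℝ)) := by
  have hD : ∀ x : ℝ, 0 < 1 + x →
      HasDerivAt (fun x : ℝ => a * ((1 + x) * Real.log (1 + x)) - x)
        (a * (Real.log (1 + x) + 1) - 1) x := by
    intro x hx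
    exact ((hasDerivAt_N x hx).const_mul a).sub (hasDerivAt_id x)
  apply strictMonoOn_of_deriv_pos (convex_Ici 0)
  · intro x hx
    have hx1 : 0 < 1 + x := by simp only [mem_Ici] at hx; linarith
    exact (hD x hx1).continuousAt.continuousWithinAt
  · intro x hx
    rw [interior_Ici] at hx
    have hx0 : 0 < x := hx
    have hx1 : 0 < 1 + x := by linarith
    rw [(hD x hx1).deriv]
    have hlog : 0 < Real.log (1 + x) := Real.log_pos (by linarith)
    nlinarith

private lemma G_strictMono :
    StrictMonoOn (fun x : ℝ => (1 + x) * Real.log (1 + x) / x) (Set.Ioi (0:ℝ)) := by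
  have hD : ∀ x : ℝ, 0 < x →
      HasDerivAt (fun x : ℝ => (1 + x) * Real.log (1 + x) / x)
        (((Real.log (1 + x) + 1) * x - (1 + x) * Real.log (1 + x) * 1) / x ^ 2) x := by
    intro x hx
    exact (hasDerivAt_N x (by linarith)).div (hasDerivAt_id x) (ne_of_gt hx)
  apply strictMonoOn_of_deriv_pos (convex_Ioi 0)
  · intro x hx
    have hx0 : 0 < x := hx
    exact (hD x hx0).continuousAt.continuousWithinAt
  · intro x hx
    rw [interior_Ioi] at hx
    have hx0 : 0 < x := hx
    rw [(hD x hx0).deriv]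
    have hlog : Real.log (1 + x) < x := by
      have := Real.log_lt_sub_one_of_pos (by linarith : (0:ℝ) < 1 + x) (by linarith)
      linarith
    have hnum : 0 < (Real.log (1 + x) + 1) * x - (1 + x) * Real.log (1 + x) * 1 := by
      nlinarith
    positivity

/-- The optimal power `p̃(α)` (the unique positive zero of
`f_α(p) = (p+p₀)α/(1+pα) - a ln(1+pα)`) is strictly decreasing in the
channel quality `α`. -/
theorem opt_power_strictAnti_in_alpha
    (p0 a : ℝ) (hp0 : 0 < p0) (ha : 1 < a)
    (f : ℝ → ℝ → ℝ)
    (hf : ∀ al p, f al p = (p + p0) * al / (1 + p * al) - a * Real.log (1 + p * al))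
    (al al' pt pt' : ℝ) (hal : 0 < al) (hal' : al < al')
    (hpt : 0 < pt) (hpt' : 0 < pt')
    (hz : f al pt = 0) (hz' : f al' pt' = 0) :
    pt' < pt := by
  rw [hf] at hz
  rw [hf] at hz'
  set u := pt * al with hu_def
  set u' := pt' * al' with hu'_def
  have hal'0 : 0 < al' := lt_trans hal hal'
  have hu0 : 0 < u := mul_pos hpt hal
  have hu'0 : 0 < u' := mul_pos hpt' hal'0
  have h1u : 0 < 1 + u := by linarith
  have h1u' : 0 < 1 + u' := by linarith
  -- from the zero equations
  have heq : a * ((1 + u) * Real.log (1 + u)) - u = p0 * al := by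
    have : (pt + p0) * al = a * Real.log (1 + u) * (1 + u) := by
      have := hz
      field_simp at this
      linarith
    nlinarith [this]
  have heq' : a * ((1 + u') * Real.log (1 + u')) - u' = p0 * al' := by
    have : (pt' + p0) * al' = a * Real.log (1 + u') * (1 + u') := by
      have := hz'
      field_simp at this
      linarith
    nlinarith [this]
  -- u < u'
  have huu' : u < u' := by
    have hlt : (fun x : ℝ => a * ((1 + x) * Real.log (1 + x)) - x) u
        < (fun x : ℝ => a * ((1 + x) * Real.log (1 + x)) - x) u' := by
      simp only [heq, heq']
      nlinarith
    exact ((hAux_strictMono a ha).lt_iff_lt (le_of_lt hu0) (le_of_lt hu'0)).mp hlt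
  -- G inequality
  have hG : (1 + u) * Real.log (1 + u) / u < (1 + u') * Real.log (1 + u') / u' :=
    G_strictMono hu0 hu'0 huu'
  have hGm : (1 + u) * Real.log (1 + u) * u' < (1 + u') * Real.log (1 + u') * u :=
    (div_lt_div_iff₀ hu0 hu'0).mp hG
  -- conclude
  have hkey : u' * (p0 * al) < u * (p0 * al') := by
    rw [← heq, ← heq']
    nlinarith [mul_lt_mul_of_pos_left hGm (by linarith : (0:ℝ) < a)]
  have h2 : u' * al < u * al' := by
    have := (mul_lt_mul_iff_left₀ hp0).mp (by nlinarith : u' * al * p0 < u * al' * p0)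
    linarith
  have : pt' * (al' * al) < pt * (al * al') := by
    calc pt' * (al' * al) = u' * al := by rw [hu'_def]; ring
      _ < u * al' := h2
      _ = pt * (al * al') := by rw [hu_def]; ring
  have hpos : 0 < al * al' := mul_pos hal hal'0
  have := (mul_lt_mul_iff_left₀ hpos).mp (by linarith [this] : pt' * (al * al') < pt * (al * al'))
  exact this
end

section
/- Suppose $p_0 \tilde p + (I - \sigma^2)/g > 0$, $\mu > 1$, $a > 1$, and let $f'(q) = \frac{(q + p_0)\alpha'}{1 + q\alpha'} - a\ln(1 + q\alpha')$ with $\alpha' = g/(\mu I + \sigma^2)$, $\alpha = g/(I + \sigma^2)$, where $\tilde p > 0$ satisfies $\frac{(\tilde p + p_0)\alpha}{1+\tilde p\alpha} = a\ln(1 + \tilde p\alpha)$. Then $f'(\mu\tilde p) < 0$. -/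
/-- Scalability: under `p₀p̃ + (I-σ²)/g > 0`, `f'(μp̃) < 0`, where `f'` uses the
scaled channel quality `α' = g/(μI + σ²)` and `p̃` is the zero for `α = g/(I+σ²)`. -/
theorem scalability_f_neg
    (μ pt p0 g σ2 I a α α' : ℝ)
    (hμ : 1 < μ) (hpt : 0 < pt) (hp0 : 0 < p0) (ha : 1 < a)
    (hg : 0 < g) (hσ : 0 < σ2) (hI : 0 ≤ I)
    (hα : α = g / (I + σ2)) (hα' : α' = g / (μ * I + σ2))
    (hcond : 0 < p0 * pt + (I - σ2) / g)
    (hzero : (pt + p0) * α / (1 + pt * α) = a * Real.log (1 + pt * α))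
    (f' : ℝ → ℝ)
    (hf' : ∀ q, f' q = (q + p0) * α' / (1 + q * α') - a * Real.log (1 + q * α')) :
    f' (μ * pt) < 0 := by
  have hA : 0 < I + σ2 := by linarith
  have hA' : 0 < μ * I + σ2 := by nlinarith
  have hαpos : 0 < α := by rw [hα]; positivity
  have hα'pos : 0 < α' := by rw [hα']; positivity
  have hαle : α' ≤ α := by
    rw [hα, hα']
    apply div_le_div_of_nonneg_left hg.le hA
    nlinarith
  have hmul : α < μ * α' := by
    rw [hα, hα', mul_div_assoc']
    rw [div_lt_div_iff₀ hA hA']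
    nlinarith [mul_pos (mul_pos hg hσ) (sub_pos.2 hμ)]
  set x : ℝ := pt * α with hx
  set x' : ℝ := μ * pt * α' with hx'
  have hxpos : 0 < x := mul_pos hpt hαpos
  have hx'pos : 0 < x' := by
    have : 0 < μ * pt := by nlinarith
    exact mul_pos this hα'pos
  have hxx' : x < x' := by
    have : pt * α < pt * (μ * α') := by
      exact (mul_lt_mul_iff_right₀ hpt).2 hmul
    calc x = pt * α := rfl
      _ < pt * (μ * α') := this
      _ = μ * pt * α' := by ring
  have h1 : (0:ℝ) < 1 + x := by linarith
  have h1' : (0:ℝ) < 1 + x' := by linarith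
  -- log gap lower bound
  have hlog : (x' - x) / (1 + x') ≤ Real.log (1 + x') - Real.log (1 + x) := by
    have h := Real.log_le_sub_one_of_pos (show 0 < (1 + x) / (1 + x') by positivity)
    rw [Real.log_div (ne_of_gt h1) (ne_of_gt h1')] at h
    have heq : (1 + x) / (1 + x') - 1 = -((x' - x) / (1 + x')) := by
      field_simp
      ring
    linarith
  have hgap : 0 < (x' - x) / (1 + x') := by
    apply div_pos (by linarith) h1'
  have hloggap : (x' - x) / (1 + x') < a * (Real.log (1 + x') - Real.log (1 + x)) := by
    have h1a : (x' - x) / (1 + x') < a * ((x' - x) / (1 + x')) := by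
      nlinarith
    nlinarith [mul_le_mul_of_nonneg_left hlog (le_of_lt (lt_trans one_pos ha))]
  -- fraction comparison
  have key2 : (μ * pt + p0) * α' / (1 + x') ≤ (pt + p0) * α / (1 + x) + (x' - x) / (1 + x') := by
    rw [div_add_div _ _ (ne_of_gt h1) (ne_of_gt h1'), div_le_div_iff₀ h1' (by positivity)]
    have hN : (μ * pt + p0) * α' * (1 + x) - ((pt + p0) * α * (1 + x') + (x' - x) * (1 + x))
        = p0 * (α' - α) - (μ - 1) * (p0 * pt * α * α') - pt * pt * α * (μ * α' - α) := by
      rw [hx, hx']; ring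
    have e1 : p0 * (α' - α) ≤ 0 := by nlinarith
    have e2 : 0 ≤ (μ - 1) * (p0 * pt * α * α') :=
      mul_nonneg (by linarith) (by positivity)
    have e3 : 0 ≤ pt * pt * α * (μ * α' - α) :=
      mul_nonneg (by positivity) (by linarith)
    have hAC : (μ * pt + p0) * α' * (1 + x) ≤ (pt + p0) * α * (1 + x') + (x' - x) * (1 + x) := by
      linarith
    calc (μ * pt + p0) * α' * ((1 + x) * (1 + x'))
        = (μ * pt + p0) * α' * (1 + x) * (1 + x') := by ring
      _ ≤ ((pt + p0) * α * (1 + x') + (x' - x) * (1 + x)) * (1 + x') :=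
          mul_le_mul_of_nonneg_right hAC h1'.le
      _ = ((pt + p0) * α * (1 + x') + (1 + x) * (x' - x)) * (1 + x') := by ring
  -- combine
  rw [hf' (μ * pt)]
  have hrw : (1 + μ * pt * α') = 1 + x' := rfl
  rw [hrw]
  have hz : a * Real.log (1 + x) = (pt + p0) * α / (1 + x) := hzero.symm
  have : a * Real.log (1 + x') = a * Real.log (1 + x) + a * (Real.log (1 + x') - Real.log (1 + x)) := by ring
  linarith
end

section
/- Let $\mathbf b : \mathbb{R}_{\ge 0}^N \to \mathbb{R}_{> 0}^N$ be a standard function, i.e., (i) $\mathbf b(\mathbf p) > 0$, (ii) $\mathbf p \ge \mathbf p' \Rightarrow \mathbf b(\mathbf p) \ge \mathbf b(\mathbf p')$, and (iii) for all $\mu > 1$, $\mu\,\mathbf b(\mathbf p) > \mathbf b(\mu\mathbf p)$ (componentwise). Then $\mathbf b$ has at most one fixed point. -/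
lemma standard_aux
    (N : ℕ) (b : (Fin N → ℝ) → (Fin N → ℝ))
    (hpos : ∀ p : Fin N → ℝ, (∀ i, 0 ≤ p i) → ∀ i, 0 < b p i)
    (hmono : ∀ p p' : Fin N → ℝ, (∀ i, 0 ≤ p i) → (∀ i, 0 ≤ p' i) →
      (∀ i, p' i ≤ p i) → ∀ i, b p' i ≤ b p i)
    (hscal : ∀ μ : ℝ, 1 < μ → ∀ p : Fin N → ℝ, (∀ i, 0 ≤ p i) →
      ∀ i, b (fun j => μ * p j) i < μ * b p i)
    (p q : Fin N → ℝ) (hp : ∀ i, 0 ≤ p i) (hq : ∀ i, 0 ≤ q i)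
    (hfp : b p = p) (hfq : b q = q) : ∀ i, q i ≤ p i := by
  by_contra h
  push_neg at h
  obtain ⟨i, hi⟩ := h
  have hppos : ∀ j, 0 < p j := by
    intro j; rw [← hfp]; exact hpos p hp j
  haveI : Nonempty (Fin N) := ⟨i⟩
  set μ := Finset.univ.sup' Finset.univ_nonempty (fun j => q j / p j) with hμ
  have hμ1 : 1 < μ := by
    have : q i / p i ≤ μ :=
      Finset.le_sup' (fun j => q j / p j) (Finset.mem_univ i)
    have h1 : 1 < q i / p i := (one_lt_div (hppos i)).mpr hi
    linarith
  have hle : ∀ j, q j ≤ μ * p j := by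
    intro j
    have : q j / p j ≤ μ :=
      Finset.le_sup' (fun j => q j / p j) (Finset.mem_univ j)
    exact (div_le_iff₀ (hppos j)).mp this
  obtain ⟨i0, -, hi0⟩ :=
    Finset.exists_mem_eq_sup' (Finset.univ_nonempty (α := Fin N))
      (fun j => q j / p j)
  have heq : q i0 = μ * p i0 := by
    have h : μ = q i0 / p i0 := hi0
    rw [h, div_mul_cancel₀ _ (hppos i0).ne']
  have hμp : ∀ j, 0 ≤ μ * p j := fun j =>
    mul_nonneg (by linarith) (hp j)
  have h1 : q i0 = b q i0 := by rw [hfq]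
  have h2 : b q i0 ≤ b (fun j => μ * p j) i0 :=
    hmono (fun j => μ * p j) q hμp hq hle i0
  have h3 : b (fun j => μ * p j) i0 < μ * b p i0 := hscal μ hμ1 p hp i0
  have h4 : μ * b p i0 = μ * p i0 := by rw [hfp]
  have : q i0 < q i0 := by
    calc q i0 = b q i0 := h1
    _ ≤ b (fun j => μ * p j) i0 := h2
    _ < μ * b p i0 := h3
    _ = μ * p i0 := h4
    _ = q i0 := heq.symm
  exact lt_irrefl _ this

/-- A standard function (positive, monotone, scalable) has at most one fixed
point on the nonnegative orthant. -/
theorem standard_function_unique_fixed_point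
    (N : ℕ) (b : (Fin N → ℝ) → (Fin N → ℝ))
    (hpos : ∀ p : Fin N → ℝ, (∀ i, 0 ≤ p i) → ∀ i, 0 < b p i)
    (hmono : ∀ p p' : Fin N → ℝ, (∀ i, 0 ≤ p i) → (∀ i, 0 ≤ p' i) →
      (∀ i, p' i ≤ p i) → ∀ i, b p' i ≤ b p i)
    (hscal : ∀ μ : ℝ, 1 < μ → ∀ p : Fin N → ℝ, (∀ i, 0 ≤ p i) →
      ∀ i, b (fun j => μ * p j) i < μ * b p i) :
    ∀ p q : Fin N → ℝ, (∀ i, 0 ≤ p i) → (∀ i, 0 ≤ q i) →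
      b p = p → b q = q → p = q := by
  intro p q hp hq hfp hfq
  funext i
  exact le_antisymm
    (standard_aux N b hpos hmono hscal q p hq hp hfq hfp i)
    (standard_aux N b hpos hmono hscal p q hp hq hfp hfq i)
end

section
/- Let $u(p; \alpha) = \frac{C V_0^a \log_2(1+p\alpha)}{(p+p_0)^a}$ and let $p^*(\alpha) \in (0, \bar p]$ be the constrained maximizer $\min(\tilde p(\alpha), \bar p)$. Then the equilibrium utility $\alpha \mapsto u(p^*(\alpha); \alpha)$ is strictly increasing in the channel quality $\alpha > 0$. -/
open Real Set

/-- The equilibrium utility `α ↦ u(p*(α); α)` with `p*(α) = min(p̃(α), p̄)` is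
strictly increasing in the channel quality `α > 0`. -/
theorem equilibrium_utility_strictMono_in_alpha
    (C V0 p0 a pbar : ℝ) (hC : 0 < C) (hV0 : 0 < V0)
    (hp0 : 0 < p0) (ha : 1 < a) (hpbar : 0 < pbar)
    (u : ℝ → ℝ → ℝ)
    (hu : ∀ p al, u p al = C * V0 ^ a * Real.logb 2 (1 + p * al) / (p + p0) ^ a)
    (f : ℝ → ℝ → ℝ)
    (hf : ∀ al p, f al p = (p + p0) * al / (1 + p * al) - a * Real.log (1 + p * al))
    (ptil : ℝ → ℝ)
    (hptil : ∀ al, 0 < al → 0 < ptil al ∧ f al (ptil al) = 0)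
    (huniq : ∀ al, 0 < al → ∀ p, 0 < p → f al p = 0 → p = ptil al) :
    StrictMonoOn (fun al => u (min (ptil al) pbar) al) (Set.Ioi (0 : ℝ)) := by
  have hlog2 : (0:ℝ) < Real.log 2 := Real.log_pos (by norm_num)
  have hK : (0:ℝ) < C * V0 ^ a := by positivity
  -- the key maximality lemma: for fixed al > 0, u(·, al) on (0, pbar] is maximized
  -- at min (ptil al) pbar
  have key : ∀ al, 0 < al → ∀ q, 0 < q → q ≤ pbar →
      u q al ≤ u (min (ptil al) pbar) al := by
    intro al hal
    obtain ⟨hptpos, hptzero⟩ := hptil al hal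
    have hf0 : f al 0 = p0 * al := by rw [hf]; simp
    -- continuity of f al at nonneg points
    have hcf : ∀ x : ℝ, 0 ≤ x → ContinuousAt (f al) x := by
      intro x hx
      have hx1 : (0:ℝ) < 1 + x * al := by nlinarith
      have hfeq : f al = fun p => (p + p0) * al / (1 + p * al) - a * Real.log (1 + p * al) :=
        funext (hf al)
      rw [hfeq]
      apply ContinuousAt.sub
      · exact ContinuousAt.div (by fun_prop) (by fun_prop) (ne_of_gt hx1)
      · exact ContinuousAt.mul continuousAt_const
          (ContinuousAt.log (by fun_prop) (ne_of_gt hx1))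
    -- f is positive left of ptil al
    have hfpos : ∀ x, 0 ≤ x → x < ptil al → 0 < f al x := by
      intro x hx0 hxpt
      rcases eq_or_lt_of_le hx0 with h | h
      · rw [← h, hf0]; positivity
      by_contra hle
      push_neg at hle
      rcases eq_or_lt_of_le hle with heq | hlt
      · exact absurd (huniq al hal x h heq) (ne_of_lt hxpt)
      · have hcont : ContinuousOn (f al) (Icc 0 x) := fun y hy =>
          (hcf y hy.1).continuousWithinAt
        have hsub := intermediate_value_Ioo' (le_of_lt h) hcont
        have h0mem : (0:ℝ) ∈ Ioo (f al x) (f al 0) := ⟨hlt, by rw [hf0]; positivity⟩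
        obtain ⟨q, hqmem, hq0⟩ := hsub h0mem
        have hqeq := huniq al hal q hqmem.1 hq0
        rw [hqeq] at hqmem
        linarith [hqmem.2]
    -- f is negative right of ptil al
    have hfneg : ∀ x, ptil al < x → f al x < 0 := by
      have hM : ∀ M, p0 ≤ M → Real.exp 2 ≤ M * al → f al M < 0 := by
        intro M hMp0 hMal
        have hMpos : (0:ℝ) < M := lt_of_lt_of_le hp0 hMp0
        have hMalpos : (0:ℝ) < M * al := lt_of_lt_of_le (Real.exp_pos 2) hMal
        have h1 : (0:ℝ) < 1 + M * al := by linarith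
        have hT : (M + p0) * al / (1 + M * al) ≤ 2 := by
          rw [div_le_iff₀ h1]
          nlinarith [mul_pos hMpos hal]
        have hL : 2 < Real.log (1 + M * al) := by
          have hexp : Real.exp 2 < 1 + M * al := by linarith
          calc 2 = Real.log (Real.exp 2) := (Real.log_exp 2).symm
          _ < Real.log (1 + M * al) := Real.log_lt_log (Real.exp_pos 2) hexp
        have : a * Real.log (1 + M * al) > 2 := by nlinarith
        rw [hf]; linarith
      intro x hx
      have hxpos : 0 < x := lt_trans hptpos hx
      by_contra hge
      push_neg at hge
      rcases eq_or_lt_of_le hge with heq | hlt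
      · exact absurd (huniq al hal x hxpos heq.symm) (ne_of_gt hx)
      · set M := max x (max p0 (Real.exp 2 / al)) + 1 with hMdef
        have h1 : x ≤ max x (max p0 (Real.exp 2 / al)) := le_max_left _ _
        have h2 : p0 ≤ max x (max p0 (Real.exp 2 / al)) :=
          le_trans (le_max_left _ _) (le_max_right _ _)
        have h3 : Real.exp 2 / al ≤ max x (max p0 (Real.exp 2 / al)) :=
          le_trans (le_max_right _ _) (le_max_right _ _)
        have hxM : x < M := by simp only [hMdef]; linarith
        have hfM : f al M < 0 := by
          apply hM
          · simp only [hMdef]; linarith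
          · have hdiv : Real.exp 2 / al ≤ M := by simp only [hMdef]; linarith
            calc Real.exp 2 = (Real.exp 2 / al) * al := by field_simp
            _ ≤ M * al := mul_le_mul_of_nonneg_right hdiv (le_of_lt hal)
        have hcont : ContinuousOn (f al) (Icc x M) := fun y hy =>
          (hcf y (le_trans (le_of_lt hxpos) hy.1)).continuousWithinAt
        have hsub := intermediate_value_Ioo' (le_of_lt hxM) hcont
        obtain ⟨q, hqmem, hq0⟩ := hsub ⟨hfM, hlt⟩
        have hqeq := huniq al hal q (lt_trans hxpos hqmem.1) hq0
        rw [hqeq] at hqmem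
        linarith [hqmem.1]
    -- derivative of u(·, al) at nonneg points
    have hU : ∀ p : ℝ, 0 ≤ p →
        HasDerivAt (fun q => u q al)
          (C * V0 ^ a / Real.log 2 * ((p + p0) ^ (a - 1) * f al p / ((p + p0) ^ a) ^ 2)) p := by
      intro p hp
      have hx : (0:ℝ) < p + p0 := by linarith
      have h1 : (0:ℝ) < 1 + p * al := by nlinarith
      have hfunext : (fun q => u q al)
          = fun q => C * V0 ^ a / Real.log 2 * (Real.log (1 + q * al) / (q + p0) ^ a) := by
        funext q
        rw [hu, Real.logb]
        ring
      rw [hfunext]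
      have hN : HasDerivAt (fun q : ℝ => Real.log (1 + q * al)) (al / (1 + p * al)) p := by
        have h0 : HasDerivAt (fun q : ℝ => 1 + q * al) al p := by
          simpa using ((hasDerivAt_id p).mul_const al).const_add 1
        simpa using h0.log (ne_of_gt h1)
      have hD : HasDerivAt (fun q : ℝ => (q + p0) ^ a) (a * (p + p0) ^ (a - 1)) p := by
        have h0 : HasDerivAt (fun q : ℝ => q + p0) 1 p := (hasDerivAt_id p).add_const p0
        simpa using h0.rpow_const (Or.inl (ne_of_gt hx))
      have hQ := (hN.div hD (by positivity)).const_mul (C * V0 ^ a / Real.log 2)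
      refine hQ.congr_deriv ?_
      have hsplit : (p + p0) ^ a = (p + p0) ^ (a - 1) * (p + p0) := by
        rw [Real.rpow_sub hx, Real.rpow_one]
        field_simp
      rw [hf, hsplit]
      have hy : (0:ℝ) < (p + p0) ^ (a - 1) := Real.rpow_pos_of_pos hx _
      field_simp
    have hcontU : ∀ x : ℝ, 0 ≤ x → ContinuousAt (fun q => u q al) x :=
      fun x hx => (hU x hx).continuousAt
    -- strictly increasing on [0, ptil al]
    have hmono : StrictMonoOn (fun q => u q al) (Icc 0 (ptil al)) := by
      apply strictMonoOn_of_deriv_pos (convex_Icc 0 (ptil al))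
      · exact fun x hx => (hcontU x hx.1).continuousWithinAt
      · intro x hx
        rw [interior_Icc] at hx
        rw [(hU x (le_of_lt hx.1)).deriv]
        have hfx := hfpos x (le_of_lt hx.1) hx.2
        have hx0 : (0:ℝ) < x + p0 := by linarith [hx.1]
        exact mul_pos (div_pos hK hlog2)
          (div_pos (mul_pos (Real.rpow_pos_of_pos hx0 _) hfx)
            (pow_pos (Real.rpow_pos_of_pos hx0 _) 2))
    -- strictly decreasing on [ptil al, pbar]
    have hanti : StrictAntiOn (fun q => u q al) (Icc (ptil al) pbar) := by
      apply strictAntiOn_of_deriv_neg (convex_Icc (ptil al) pbar)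
      · exact fun x hx => (hcontU x (le_trans (le_of_lt hptpos) hx.1)).continuousWithinAt
      · intro x hx
        rw [interior_Icc] at hx
        have hxpos : 0 < x := lt_trans hptpos hx.1
        rw [(hU x (le_of_lt hxpos)).deriv]
        have hfx := hfneg x hx.1
        have hx0 : (0:ℝ) < x + p0 := by linarith
        exact mul_neg_of_pos_of_neg (div_pos hK hlog2)
          (div_neg_of_neg_of_pos (mul_neg_of_pos_of_neg (Real.rpow_pos_of_pos hx0 _) hfx)
            (pow_pos (Real.rpow_pos_of_pos hx0 _) 2))
    -- assemble the maximality claim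
    intro q hq hqbar
    rcases le_or_gt (ptil al) pbar with hcase | hcase
    · rw [min_eq_left hcase]
      rcases le_or_gt q (ptil al) with hqle | hqgt
      · exact hmono.monotoneOn ⟨le_of_lt hq, hqle⟩ ⟨le_of_lt hptpos, le_refl _⟩ hqle
      · exact le_of_lt (hanti ⟨le_refl _, hcase⟩ ⟨le_of_lt hqgt, hqbar⟩ hqgt)
    · rw [min_eq_right (le_of_lt hcase)]
      exact hmono.monotoneOn ⟨le_of_lt hq, le_trans hqbar (le_of_lt hcase)⟩
        ⟨le_of_lt hpbar, le_of_lt hcase⟩ hqbar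
  -- main argument
  intro a1 ha1 a2 ha2 h12
  simp only [Set.mem_Ioi] at ha1 ha2
  set p1 := min (ptil a1) pbar with hp1def
  have hp1pos : 0 < p1 := lt_min (hptil a1 ha1).1 hpbar
  have hp1bar : p1 ≤ pbar := min_le_right _ _
  have step1 : u p1 a1 < u p1 a2 := by
    rw [hu, hu]
    have h1 : (0:ℝ) < 1 + p1 * a1 := by nlinarith
    have hlt : 1 + p1 * a1 < 1 + p1 * a2 := by nlinarith
    have hlog : Real.logb 2 (1 + p1 * a1) < Real.logb 2 (1 + p1 * a2) :=
      Real.logb_lt_logb (by norm_num) h1 hlt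
    have hx : (0:ℝ) < (p1 + p0) ^ a := Real.rpow_pos_of_pos (by linarith) _
    apply div_lt_div_of_pos_right ?_ hx
    nlinarith
  have step2 : u p1 a2 ≤ u (min (ptil a2) pbar) a2 := key a2 ha2 p1 hp1pos hp1bar
  simp only []
  linarith
end
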